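/- Let L', M', N', P', s, t be real numbers with L' > 0, M' > 0, P' > 0 and N' > P', and define γ₁(x) = (L' + M'·cos(s + x)) / (N' + P'·cos(t + x)). If the derivative of γ₁ at a real point x equals zero, then sin(t + x)/(M'·N') − sin(s + x)/(L'·P') = sin(s − t)/(L'·N'); equivalently, L'·P'·sin(t + x) − M'·N'·sin(s + x) = M'·P'·sin(s − t). -/

import Mathlib

/-- For `L' > 0, M' > 0, P' > 0, N' > P'` and
`γ₁(x) = (L' + M'·cos(s + x)) / (N' + P'·cos(t + x))`, if `deriv γ₁ x = 0` then
`sin(t + x)/(M'·N') − sin(s + x)/(L'·P') = sin(s − t)/(L'·N')`; equivalently,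
`L'·P'·sin(t + x) − M'·N'·sin(s + x) = M'·P'·sin(s − t)`. -/
theorem stmt_2 (L' M' N' P' s t : ℝ) (hL : L' > 0) (hM : M' > 0) (hP : P' > 0)
    (hNP : N' > P')
    (γ₁ : ℝ → ℝ)
    (hγ : γ₁ = fun x => (L' + M' * Real.cos (s + x)) / (N' + P' * Real.cos (t + x)))
    (x : ℝ) (hx : deriv γ₁ x = 0) :
    Real.sin (t + x) / (M' * N') - Real.sin (s + x) / (L' * P') =
        Real.sin (s - t) / (L' * N') ∧
      L' * P' * Real.sin (t + x) - M' * N' * Real.sin (s + x) =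
        M' * P' * Real.sin (s - t) := by
  have hden : (0:ℝ) < N' + P' * Real.cos (t + x) := by
    nlinarith [Real.neg_one_le_cos (t + x)]
  have hu : HasDerivAt (fun y => L' + M' * Real.cos (s + y))
      (M' * (-Real.sin (s + x) * 1)) x := by
    exact (((Real.hasDerivAt_cos (s + x)).comp x
      ((hasDerivAt_id x).const_add s)).const_mul M').const_add L'
  have hv : HasDerivAt (fun y => N' + P' * Real.cos (t + y))
      (P' * (-Real.sin (t + x) * 1)) x := by
    exact (((Real.hasDerivAt_cos (t + x)).comp x
      ((hasDerivAt_id x).const_add t)).const_mul P').const_add N'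
  have hq : HasDerivAt γ₁
      ((M' * (-Real.sin (s + x) * 1) * (N' + P' * Real.cos (t + x)) -
        (L' + M' * Real.cos (s + x)) * (P' * (-Real.sin (t + x) * 1))) /
        (N' + P' * Real.cos (t + x)) ^ 2) x := by
    rw [hγ]; exact hu.div hv (ne_of_gt hden)
  have hd := hq.deriv
  rw [hx] at hd
  have hnum : M' * (-Real.sin (s + x) * 1) * (N' + P' * Real.cos (t + x)) -
      (L' + M' * Real.cos (s + x)) * (P' * (-Real.sin (t + x) * 1)) = 0 := by
    have h2 : (N' + P' * Real.cos (t + x)) ^ 2 ≠ 0 := pow_ne_zero _ (ne_of_gt hden)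
    field_simp at hd
    linarith [hd]
  have key : L' * P' * Real.sin (t + x) - M' * N' * Real.sin (s + x) =
      M' * P' * Real.sin (s - t) := by
    have hsub : Real.sin (s - t) =
        Real.sin (s + x) * Real.cos (t + x) - Real.cos (s + x) * Real.sin (t + x) := by
      have : s - t = (s + x) - (t + x) := by ring
      rw [this, Real.sin_sub]
    rw [hsub]; nlinarith [hnum]
  refine ⟨?_, key⟩
  have hL' := ne_of_gt hL
  have hM' := ne_of_gt hM
  have hP' := ne_of_gt hP
  have hN' : N' ≠ 0 := ne_of_gt (lt_trans hP hNP)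
  field_simp
  linear_combination key
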